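/- Let G be a connected graph on vertex set [n] and suppose that every pair of non-adjacent vertices of G has at least two common neighbours. Then the only set of queries Q ⊆ binom([n],2) that reconstructs G (i.e., G is the unique graph on [n] agreeing with G on all distances d(x,y) for {x,y} ∈ Q) is Q = binom([n],2). In other words, if Q ≠ binom([n],2), then there exists a graph G' ≠ G on [n] with d_{G'}(x,y) = d_G(x,y) for all {x,y} ∈ Q. -/

import Mathlib

private lemma dist_eq_two_aux {V : Type*} (H : SimpleGraph V) {x y w : V}
    (hxy : x ≠ y) (hna : ¬ H.Adj x y) (h1 : H.Adj x w) (h2 : H.Adj w y) :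
    H.dist x y = 2 := by
  have hle : H.dist x y ≤ 2 := by
    have := H.dist_le (SimpleGraph.Walk.cons h1 (SimpleGraph.Walk.cons h2 SimpleGraph.Walk.nil))
    simpa using this
  have hr : H.Reachable x y := ⟨SimpleGraph.Walk.cons h1 (SimpleGraph.Walk.cons h2 SimpleGraph.Walk.nil)⟩
  have hpos : 0 < H.dist x y := hr.pos_dist_of_ne hxy
  have hne1 : H.dist x y ≠ 1 := by
    intro h; exact hna (SimpleGraph.dist_eq_one_iff_adj.mp h)
  omega

/-- If a connected graph on `Fin n` is such that every pair of distinct non-adjacent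
vertices has at least two common neighbours, then any query set `Q` (a set of pairs of
distinct vertices) other than the full set of pairs fails to reconstruct `G`: there is a
graph `G' ≠ G` with the same distances on all queried pairs. -/
theorem stmt0 {n : ℕ} (G : SimpleGraph (Fin n)) (hconn : G.Connected)
    (hcn : ∀ u v : Fin n, u ≠ v → ¬ G.Adj u v →
      ∃ w1 w2 : Fin n, w1 ≠ w2 ∧ G.Adj u w1 ∧ G.Adj v w1 ∧ G.Adj u w2 ∧ G.Adj v w2)
    (Q : Set (Sym2 (Fin n))) (hQsub : ∀ e ∈ Q, ¬ e.IsDiag)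
    (hQne : Q ≠ {e : Sym2 (Fin n) | ¬ e.IsDiag}) :
    ∃ G' : SimpleGraph (Fin n), G' ≠ G ∧
      ∀ x y : Fin n, s(x, y) ∈ Q → G'.dist x y = G.dist x y := by
  -- find a missing non-diagonal pair
  have hss : Q ⊂ {e : Sym2 (Fin n) | ¬ e.IsDiag} :=
    ⟨fun e he => hQsub e he, fun h => hQne (Set.Subset.antisymm (fun e he => hQsub e he) h)⟩
  obtain ⟨e, he, heQ⟩ := Set.exists_of_ssubset hss
  induction e using Sym2.ind with
  | _ a b =>
  have hab : a ≠ b := by simpa using he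
  -- flip the adjacency of (a, b)
  set G' : SimpleGraph (Fin n) :=
    { Adj := fun x y => (G.Adj x y ∧ s(x, y) ≠ s(a, b)) ∨ (¬ G.Adj x y ∧ x ≠ y ∧ s(x, y) = s(a, b))
      symm := by
        refine ⟨fun x y h => ?_⟩
        rcases h with ⟨h1, h2⟩ | ⟨h1, h2, h3⟩
        · exact Or.inl ⟨h1.symm, by rwa [Sym2.eq_swap]⟩
        · exact Or.inr ⟨fun h => h1 h.symm, h2.symm, by rwa [Sym2.eq_swap]⟩
      loopless := by
        refine ⟨fun x h => ?_⟩
        rcases h with ⟨h1, _⟩ | ⟨_, h2, _⟩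
        · exact G.irrefl h1
        · exact h2 rfl } with hG'
  have hG'adj : ∀ x y, G'.Adj x y ↔
      (G.Adj x y ∧ s(x, y) ≠ s(a, b)) ∨ (¬ G.Adj x y ∧ x ≠ y ∧ s(x, y) = s(a, b)) := by
    intro x y; rfl
  refine ⟨G', ?_, ?_⟩
  · intro h
    by_cases hGab : G.Adj a b
    · have : ¬ G'.Adj a b := by
        rw [hG'adj]
        rintro (⟨_, h2⟩ | ⟨h1, _, _⟩)
        · exact h2 rfl
        · exact h1 hGab
      rw [h] at this; exact this hGab
    · have : G'.Adj a b := by rw [hG'adj]; exact Or.inr ⟨hGab, hab, rfl⟩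
      rw [h] at this; exact hGab this
  · intro x y hxyQ
    have hxyne : s(x, y) ≠ s(a, b) := fun h => heQ (h ▸ hxyQ)
    by_cases hxy : x = y
    · subst hxy; simp [SimpleGraph.dist_self]
    by_cases hXY : G.Adj x y
    · have h1 : G.dist x y = 1 := SimpleGraph.dist_eq_one_iff_adj.mpr hXY
      have h2 : G'.dist x y = 1 := SimpleGraph.dist_eq_one_iff_adj.mpr
        (by rw [hG'adj]; exact Or.inl ⟨hXY, hxyne⟩)
      rw [h1, h2]
    · obtain ⟨w1, w2, hw12, hx1, hy1, hx2, hy2⟩ := hcn x y hxy hXY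
      have hG'xy : ¬ G'.Adj x y := by
        rw [hG'adj]
        rintro (⟨h1, _⟩ | ⟨_, _, h3⟩)
        · exact hXY h1
        · exact hxyne h3
      -- one of the two common neighbours keeps both its edges after the flip
      have key : ∃ w, G.Adj x w ∧ G.Adj y w ∧ s(x, w) ≠ s(a, b) ∧ s(w, y) ≠ s(a, b) := by
        have hx1' := hx1.ne
        have hy1' := hy1.ne
        have hx2' := hx2.ne
        have hy2' := hy2.ne
        by_cases c1 : s(x, w1) = s(a, b) ∨ s(w1, y) = s(a, b)
        · refine ⟨w2, hx2, hy2, ?_, ?_⟩ <;> intro c2 <;>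
            rcases c1 with c1 | c1 <;>
            · have h := c1.trans c2.symm
              rw [Sym2.eq_iff] at h
              rcases h with ⟨h1, h2⟩ | ⟨h1, h2⟩ <;> simp_all
        · push_neg at c1
          exact ⟨w1, hx1, hy1, c1.1, c1.2⟩
      obtain ⟨w, hxw, hyw, ne1, ne2⟩ := key
      have d1 : G.dist x y = 2 := dist_eq_two_aux G hxy hXY hx1 hy1.symm
      have d2 : G'.dist x y = 2 := by
        refine dist_eq_two_aux G' (w := w) hxy hG'xy ?_ ?_
        · rw [hG'adj]; exact Or.inl ⟨hxw, ne1⟩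
        · rw [hG'adj]; exact Or.inl ⟨hyw.symm, ne2⟩
      rw [d1, d2]
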